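/- Let μ_1 > μ_2 > ... > μ_m > μ_{m+1} = 0 be reals, r_1, ..., r_m positive reals with r_i ≤ r_{i+1}, λ > 0, k ≥ 0 an integer, and δ_i reals satisfying δ_i ≥ λ(r_{i+1} + k r_i) for i < m, δ_m ≥ λ(k+1) r_m. If Σ_{i=1}^m δ_i(μ_i − μ_{i+1}) = (k+1)λ Σ_{i=1}^m r_i(μ_i − μ_{i+1}), then r_i = r_{i+1} for all i < m. -/

import Mathlib

open Finset

/-- Equality analysis in Theorem A(ii): if equality holds in the Xiao-type summation
`Σ δ_i(μ_i − μ_{i+1}) = (k+1)λ Σ r_i(μ_i − μ_{i+1})` with strictly decreasing slopes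
`μ_1 > ⋯ > μ_m > μ_{m+1} = 0`, positive increasing ranks `r_i`, `λ > 0`, and
`δ_i ≥ λ(r_{i+1} + k r_i)` for `i < m`, `δ_m ≥ λ(k+1) r_m`, then all ranks coincide. -/
theorem xiao_equality_forces_semistable (m k : ℕ) (hm : 1 ≤ m)
    (r μ δ : ℕ → ℝ) (lam : ℝ)
    (hr : ∀ i, 1 ≤ i → i ≤ m → 0 < r i)
    (hrmono : ∀ i, 1 ≤ i → i < m → r i ≤ r (i + 1))
    (hμ : ∀ i, 1 ≤ i → i ≤ m → μ (i + 1) < μ i)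
    (hμlast : μ (m + 1) = 0)
    (hlam : 0 < lam)
    (hδ : ∀ i, 1 ≤ i → i < m → lam * (r (i + 1) + (k : ℝ) * r i) ≤ δ i)
    (hδm : lam * ((k : ℝ) + 1) * r m ≤ δ m)
    (heq : ∑ i ∈ Icc 1 m, δ i * (μ i - μ (i + 1)) =
      ((k : ℝ) + 1) * lam * ∑ i ∈ Icc 1 m, r i * (μ i - μ (i + 1))) :
    ∀ i, 1 ≤ i → i < m → r i = r (i + 1) := by
  have hgap : ∀ i, 1 ≤ i → i ≤ m → 0 < μ i - μ (i + 1) := fun i h1 h2 =>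
    sub_pos.mpr (hμ i h1 h2)
  have hterm : ∀ i ∈ Icc 1 m,
      ((k : ℝ) + 1) * lam * (r i * (μ i - μ (i + 1))) ≤ δ i * (μ i - μ (i + 1)) := by
    intro i hi
    obtain ⟨h1, h2⟩ := mem_Icc.mp hi
    have hg := (hgap i h1 h2).le
    rcases lt_or_eq_of_le h2 with hlt | heqm
    · have h1' : lam * (((k : ℝ) + 1) * r i) ≤ δ i := by
        have := hδ i h1 hlt
        nlinarith [hrmono i h1 hlt, hlam.le]
      nlinarith
    · subst heqm
      nlinarith
  rw [Finset.mul_sum] at heq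
  have hall := (Finset.sum_eq_sum_iff_of_le hterm).mp heq.symm
  intro i h1 hlt
  have hi : i ∈ Icc 1 m := mem_Icc.mpr ⟨h1, hlt.le⟩
  have he := hall i hi
  have hg := hgap i h1 hlt.le
  have hdi : δ i = ((k : ℝ) + 1) * lam * r i := by
    have h2 : (((k : ℝ) + 1) * lam * r i) * (μ i - μ (i + 1)) = δ i * (μ i - μ (i + 1)) := by
      linarith [he]
    exact (mul_right_cancel₀ (ne_of_gt hg) h2).symm
  have hle : r (i + 1) ≤ r i := by
    have := hδ i h1 hlt
    rw [hdi] at this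
    nlinarith
  exact le_antisymm (hrmono i h1 hlt) hle
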